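/- Let p be a prime, K a field of characteristic p, t ∈ K, and φ(X) = tX + c_1X^p + ⋯ + c_DX^{p^D} ∈ K[X] with D ≥ 1 and c_D ≠ 0. Let |·|_v be a nonarchimedean absolute value on K such that |P(t)|_v = 1 for every nonzero P ∈ 𝔽_p[X] and |c_i|_v ≤ 1 for all i. Let g ≥ 1 and let Γ ⊆ K^g be the Φ(R)-submodule (under the coordinatewise action) generated by finitely many points all of whose coordinates x satisfy |x|_v ≤ 1. Then the image of Γ under the diagonal embedding K^g → K_v^g is a discrete and closed subgroup of K_v^g; in particular, the topological closure of Γ in K_v^g equals Γ. -/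

import Mathlib

/-- The `𝔽_p`-linear map `T_φ : K → K` induced by the additive polynomial
`φ(X) = tX + c₁X^p + ⋯ + c_D X^{p^D}` of a Drinfeld module of generic characteristic. -/
noncomputable def genericTphi {K : Type*} [Field K] (p D : ℕ) (t : K) (c : ℕ → K) :
    K → K :=
  fun x => t * x + ∑ i ∈ Finset.Icc 1 D, c i * x ^ (p ^ i)

/-- The canonical embedding of `K` into the completion `K_v` of `K` with respect to an
absolute value `v`. -/
noncomputable def embCompletion {K : Type*} [Field K] (v : AbsoluteValue K ℝ) :
    K → v.Completion :=
  fun x => (((WithAbs.equiv v).symm x : WithAbs v) : v.Completion)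

set_option linter.unusedSectionVars false

namespace Stmt2Proof

open Polynomial Finset

variable {K : Type*} [Field K] {p : ℕ} [Fact p.Prime] [CharP K p]
variable {t : K} {D : ℕ} {c : ℕ → K} {v : AbsoluteValue K ℝ}

theorem Tk_zero : genericTphi p D t c 0 = 0 := by
  simp [genericTphi, zero_pow (pow_ne_zero _ (Fact.out : p.Prime).ne_zero)]

theorem Tk_add (x y : K) : genericTphi p D t c (x + y) =
    genericTphi p D t c x + genericTphi p D t c y := by
  simp only [genericTphi, add_pow_char_pow, mul_add, Finset.sum_add_distrib]
  ring

theorem v_sum_le (hna : IsNonarchimedean (v : K → ℝ)) {ι : Type*} (s : Finset ι) (f : ι → K)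
    {B : ℝ} (hB : 0 ≤ B) (h : ∀ i ∈ s, v (f i) ≤ B) : v (∑ i ∈ s, f i) ≤ B := by
  induction s using Finset.cons_induction with
  | empty => simpa using hB
  | cons a s ha ih =>
    rw [Finset.sum_cons]
    exact le_trans (hna _ _) (max_le (h _ (Finset.mem_cons_self _ _))
      (ih fun i hi => h i (Finset.mem_cons_of_mem hi)))

theorem v_add_eq (hna : IsNonarchimedean (v : K → ℝ)) {x y : K} (h : v y < v x) :
    v (x + y) = v x := by
  refine le_antisymm (le_trans (hna _ _) (max_le le_rfl h.le)) ?_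
  have h2 := hna (x + y) (-y)
  rw [add_neg_cancel_right, v.map_neg] at h2
  rcases max_cases (v (x + y)) (v y) with ⟨he, _⟩ | ⟨he, hlt⟩
  · rw [he] at h2; exact h2
  · rw [he] at h2; exact absurd (lt_of_le_of_lt h2 h) (lt_irrefl _)

theorem v_t_eq_one
    (hunit : ∀ P : Polynomial (ZMod p), P ≠ 0 →
      v (Polynomial.eval₂ (ZMod.castHom (dvd_refl p) K) t P) = 1) : v t = 1 := by
  have := hunit X X_ne_zero
  rwa [eval₂_X] at this

theorem v_int_le_one
    (hunit : ∀ P : Polynomial (ZMod p), P ≠ 0 →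
      v (Polynomial.eval₂ (ZMod.castHom (dvd_refl p) K) t P) = 1)
    (m : ℤ) : v ((m : K)) ≤ 1 := by
  have hKm : ((m : K)) = ZMod.castHom (dvd_refl p) K ((m : ZMod p)) := by
    rw [map_intCast]
  by_cases h : ((m : ZMod p)) = 0
  · rw [hKm, h, map_zero, map_zero]; exact zero_le_one
  · have := hunit (C ((m : ZMod p))) (C_ne_zero.mpr h)
    rw [eval₂_C] at this
    rw [hKm, this]


theorem v_Tk_le (hna : IsNonarchimedean (v : K → ℝ))
    (hvt : v t = 1) (hint : ∀ i, 1 ≤ i → i ≤ D → v (c i) ≤ 1)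
    {x : K} (hx : v x ≤ 1) : v (genericTphi p D t c x) ≤ v x := by
  have hsum : v (∑ i ∈ Finset.Icc 1 D, c i * x ^ (p ^ i)) ≤ v x := by
    refine v_sum_le hna _ _ (v.nonneg x) ?_
    intro i hi
    rw [Finset.mem_Icc] at hi
    rw [v.map_mul, v.map_pow]
    calc v (c i) * v x ^ p ^ i ≤ 1 * v x ^ p ^ i := by
          exact mul_le_mul_of_nonneg_right (hint i hi.1 hi.2) (pow_nonneg (v.nonneg x) _)
      _ = v x ^ p ^ i := one_mul _
      _ ≤ v x := pow_le_of_le_one (v.nonneg x) hx (pow_ne_zero _ (Fact.out : p.Prime).ne_zero)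
  have : v (t * x) = v x := by rw [v.map_mul, hvt, one_mul]
  exact le_trans (hna _ _) (max_le this.le hsum)

theorem v_Tk_iter_le (hna : IsNonarchimedean (v : K → ℝ))
    (hvt : v t = 1) (hint : ∀ i, 1 ≤ i → i ≤ D → v (c i) ≤ 1)
    (j : ℕ) {x : K} (hx : v x ≤ 1) : v ((genericTphi p D t c)^[j] x) ≤ v x := by
  induction j with
  | zero => simp
  | succ j ih =>
    rw [Function.iterate_succ_apply']
    exact le_trans (v_Tk_le hna hvt hint (le_trans ih hx)) ih

theorem v_Tk_sub_le (hna : IsNonarchimedean (v : K → ℝ))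
    (hint : ∀ i, 1 ≤ i → i ≤ D → v (c i) ≤ 1)
    {x : K} (hx : v x ≤ 1) : v (genericTphi p D t c x - t * x) ≤ v x ^ p := by
  have : genericTphi p D t c x - t * x = ∑ i ∈ Finset.Icc 1 D, c i * x ^ (p ^ i) := by
    simp [genericTphi]
  rw [this]
  refine v_sum_le hna _ _ (pow_nonneg (v.nonneg x) _) ?_
  intro i hi
  rw [Finset.mem_Icc] at hi
  rw [v.map_mul, v.map_pow]
  calc v (c i) * v x ^ p ^ i ≤ 1 * v x ^ p ^ i :=
        mul_le_mul_of_nonneg_right (hint i hi.1 hi.2) (pow_nonneg (v.nonneg x) _)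
    _ = v x ^ p ^ i := one_mul _
    _ ≤ v x ^ p := by
        refine pow_le_pow_of_le_one (v.nonneg x) hx ?_
        calc p = p ^ 1 := (pow_one p).symm
          _ ≤ p ^ i := Nat.pow_le_pow_right (Fact.out : p.Prime).pos hi.1

theorem v_Tk_iter_sub_le (hna : IsNonarchimedean (v : K → ℝ))
    (hvt : v t = 1) (hint : ∀ i, 1 ≤ i → i ≤ D → v (c i) ≤ 1)
    (j : ℕ) {x : K} (hx : v x ≤ 1) :
    v ((genericTphi p D t c)^[j] x - t ^ j * x) ≤ v x ^ p := by
  induction j with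
  | zero => simpa using pow_nonneg (v.nonneg x) p
  | succ j ih =>
    have hiter := v_Tk_iter_le (p := p) (D := D) (c := c) hna hvt hint j hx
    have key : (genericTphi p D t c)^[j + 1] x - t ^ (j + 1) * x =
        (genericTphi p D t c ((genericTphi p D t c)^[j] x) - t * ((genericTphi p D t c)^[j] x))
          + t * ((genericTphi p D t c)^[j] x - t ^ j * x) := by
      rw [Function.iterate_succ_apply']
      ring
    rw [key]
    refine le_trans (hna _ _) (max_le ?_ ?_)
    · refine le_trans (v_Tk_sub_le hna hint (le_trans hiter hx)) ?_
      exact pow_le_pow_left₀ (v.nonneg _) hiter p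
    · rw [v.map_mul, hvt, one_mul]; exact ih



/-- The action of an integer polynomial `b` on `K` through iterates of `T_φ`. -/
noncomputable def actK (p D : ℕ) (t : K) (c : ℕ → K) (b : Polynomial ℤ) (x : K) : K :=
  ∑ j ∈ Finset.range (b.natDegree + 1), ((b.coeff j : K)) * (genericTphi p D t c)^[j] x

theorem actK_zero_of {b : Polynomial ℤ}
    (hb : b.map (Int.castRingHom (ZMod p)) = 0) (x : K) : actK p D t c b x = 0 := by
  refine Finset.sum_eq_zero fun j _ => ?_
  have h1 : ((b.coeff j : ZMod p)) = 0 := by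
    have := congrArg (fun q => Polynomial.coeff q j) hb
    simpa [Polynomial.coeff_map] using this
  have h2 : ((b.coeff j : K)) = 0 := by
    have : ((b.coeff j : K)) = ZMod.castHom (dvd_refl p) K ((b.coeff j : ZMod p)) := by
      rw [map_intCast]
    rw [this, h1, map_zero]
  rw [h2, zero_mul]

theorem v_actK_le (hna : IsNonarchimedean (v : K → ℝ))
    (hunit : ∀ P : Polynomial (ZMod p), P ≠ 0 →
      v (Polynomial.eval₂ (ZMod.castHom (dvd_refl p) K) t P) = 1)
    (hint : ∀ i, 1 ≤ i → i ≤ D → v (c i) ≤ 1)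
    (b : Polynomial ℤ) {x : K} (hx : v x ≤ 1) : v (actK p D t c b x) ≤ v x := by
  refine v_sum_le hna _ _ (v.nonneg x) ?_
  intro j _
  rw [v.map_mul]
  calc v ((b.coeff j : K)) * v ((genericTphi p D t c)^[j] x)
      ≤ 1 * v x := mul_le_mul (v_int_le_one hunit _)
        (v_Tk_iter_le (p := p) (D := D) (c := c) hna (v_t_eq_one hunit) hint j hx)
        (v.nonneg _) zero_le_one
    _ = v x := one_mul _

theorem v_actK_sub_le (hna : IsNonarchimedean (v : K → ℝ))
    (hunit : ∀ P : Polynomial (ZMod p), P ≠ 0 →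
      v (Polynomial.eval₂ (ZMod.castHom (dvd_refl p) K) t P) = 1)
    (hint : ∀ i, 1 ≤ i → i ≤ D → v (c i) ≤ 1)
    (b : Polynomial ℤ) {x : K} (hx : v x ≤ 1) :
    v (actK p D t c b x -
      Polynomial.eval₂ (ZMod.castHom (dvd_refl p) K) t (b.map (Int.castRingHom (ZMod p))) * x)
      ≤ v x ^ p := by
  have hdeg : (b.map (Int.castRingHom (ZMod p))).natDegree < b.natDegree + 1 :=
    Nat.lt_succ_of_le Polynomial.natDegree_map_le
  rw [Polynomial.eval₂_eq_sum_range' _ hdeg]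
  have hco : ∀ j, ZMod.castHom (dvd_refl p) K ((b.map (Int.castRingHom (ZMod p))).coeff j)
      = ((b.coeff j : K)) := by
    intro j
    rw [Polynomial.coeff_map]
    simp only [eq_intCast]
    rw [map_intCast]
  have key : actK p D t c b x -
      (∑ j ∈ Finset.range (b.natDegree + 1),
        ZMod.castHom (dvd_refl p) K ((b.map (Int.castRingHom (ZMod p))).coeff j) * t ^ j) * x
      = ∑ j ∈ Finset.range (b.natDegree + 1),
          ((b.coeff j : K)) * ((genericTphi p D t c)^[j] x - t ^ j * x) := by
    rw [Finset.sum_mul]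
    rw [actK, ← Finset.sum_sub_distrib]
    refine Finset.sum_congr rfl fun j _ => ?_
    rw [hco j]
    ring
  rw [key]
  refine v_sum_le hna _ _ (pow_nonneg (v.nonneg x) _) ?_
  intro j _
  rw [v.map_mul]
  calc v ((b.coeff j : K)) * v ((genericTphi p D t c)^[j] x - t ^ j * x)
      ≤ 1 * (v x ^ p) := mul_le_mul (v_int_le_one hunit _)
        (v_Tk_iter_sub_le hna (v_t_eq_one hunit) hint j hx)
        (v.nonneg _) zero_le_one
    _ = v x ^ p := one_mul _

theorem v_add_eq' (hna : IsNonarchimedean (v : K → ℝ)) {x y : K} (h : v y < v x) :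
    v (x + y) = v x := by
  refine le_antisymm (le_trans (hna _ _) (max_le le_rfl h.le)) ?_
  have h2 := hna (x + y) (-y)
  rw [add_neg_cancel_right, v.map_neg] at h2
  rcases max_cases (v (x + y)) (v y) with ⟨he, _⟩ | ⟨he, hlt⟩
  · rw [he] at h2; exact h2
  · rw [he] at h2; exact absurd (lt_of_le_of_lt h2 h) (lt_irrefl _)

theorem v_t_eq_one' : True := trivial

theorem v_actK_eq (hna : IsNonarchimedean (v : K → ℝ))
    (hunit : ∀ P : Polynomial (ZMod p), P ≠ 0 →
      v (Polynomial.eval₂ (ZMod.castHom (dvd_refl p) K) t P) = 1)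
    (hint : ∀ i, 1 ≤ i → i ≤ D → v (c i) ≤ 1)
    {b : Polynomial ℤ} (hb : b.map (Int.castRingHom (ZMod p)) ≠ 0)
    {x : K} (hx : v x < 1) : v (actK p D t c b x) = v x := by
  by_cases hx0 : x = 0
  · subst hx0
    have : actK p D t c b 0 = 0 := by
      refine Finset.sum_eq_zero fun j _ => ?_
      have : (genericTphi p D t c)^[j] (0 : K) = 0 :=
        Function.iterate_fixed (Tk_zero (p := p) (D := D) (t := t) (c := c)) j
      rw [this, mul_zero]
    rw [this]
  · set e := Polynomial.eval₂ (ZMod.castHom (dvd_refl p) K) t (b.map (Int.castRingHom (ZMod p)))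
    have hve : v e = 1 := hunit _ hb
    have hvex : v (e * x) = v x := by rw [v.map_mul, hve, one_mul]
    have hvE : v (actK p D t c b x - e * x) < v x := by
      refine lt_of_le_of_lt (v_actK_sub_le hna hunit hint b hx.le) ?_
      exact pow_lt_self_of_lt_one₀ (v.pos hx0) hx (Fact.out : p.Prime).one_lt
    have : actK p D t c b x = e * x + (actK p D t c b x - e * x) := by ring
    rw [this, v_add_eq' hna (by rw [hvex]; exact hvE), hvex]


section PiNorm

variable {g : ℕ} [Nonempty (Fin g)]

/-- Sup norm on `K^g`. -/
noncomputable def NN (v : AbsoluteValue K ℝ) (z : Fin g → K) : ℝ :=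
  Finset.univ.sup' Finset.univ_nonempty fun i => v (z i)

theorem coord_le_NN (z : Fin g → K) (i : Fin g) : v (z i) ≤ NN v z := by
  unfold NN; exact Finset.le_sup' (fun i => v (z i)) (Finset.mem_univ i)

theorem NN_nonneg (z : Fin g → K) : 0 ≤ NN v z := by
  obtain ⟨i⟩ := (inferInstance : Nonempty (Fin g))
  exact le_trans (v.nonneg (z i)) (coord_le_NN z i)

theorem NN_le_iff {z : Fin g → K} {B : ℝ} : NN v z ≤ B ↔ ∀ i, v (z i) ≤ B := by
  rw [NN, Finset.sup'_le_iff]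
  exact ⟨fun h i => h i (Finset.mem_univ i), fun h i _ => h i⟩

theorem NN_lt_iff {z : Fin g → K} {B : ℝ} : NN v z < B ↔ ∀ i, v (z i) < B := by
  rw [NN, Finset.sup'_lt_iff]
  exact ⟨fun h i => h i (Finset.mem_univ i), fun h i _ => h i⟩

theorem exists_NN_eq (z : Fin g → K) : ∃ i, NN v z = v (z i) := by
  obtain ⟨i, _, h⟩ := Finset.exists_mem_eq_sup' (α := ℝ)
    (Finset.univ_nonempty (α := Fin g)) (fun i => v (z i))
  exact ⟨i, h⟩

theorem NN_pos {z : Fin g → K} (hz : z ≠ 0) : 0 < NN v z := by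
  obtain ⟨i, hi⟩ := Function.ne_iff.mp hz
  exact lt_of_lt_of_le (v.pos hi) (coord_le_NN z i)

theorem NN_congr {x y : Fin g → K} (h : ∀ i, v (x i) = v (y i)) : NN v x = NN v y :=
  Finset.sup'_congr _ rfl fun i _ => h i

theorem NN_sum_le (hna : IsNonarchimedean (v : K → ℝ)) {ι : Type*} (s : Finset ι)
    (f : ι → (Fin g → K)) {B : ℝ} (hB : 0 ≤ B) (h : ∀ k ∈ s, NN v (f k) ≤ B) :
    NN v (∑ k ∈ s, f k) ≤ B := by
  rw [NN_le_iff]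
  intro i
  have : (∑ k ∈ s, f k) i = ∑ k ∈ s, f k i := Finset.sum_apply i s f
  rw [this]
  exact v_sum_le hna _ _ hB fun k hk => le_trans (coord_le_NN (f k) i) (h k hk)

theorem NN_add_eq (hna : IsNonarchimedean (v : K → ℝ)) {x y : Fin g → K}
    (h : NN v y < NN v x) : NN v (x + y) = NN v x := by
  obtain ⟨i0, hi0⟩ := exists_NN_eq (v := v) x
  refine le_antisymm ?_ ?_
  · rw [NN_le_iff]
    intro i
    have : v (x i + y i) ≤ max (v (x i)) (v (y i)) := hna _ _
    refine le_trans this (max_le (coord_le_NN x i) ?_)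
    exact le_trans (coord_le_NN y i) (le_trans h.le le_rfl)
  · have hcoord : v ((x + y) i0) = v (x i0) := by
      have : v (y i0) < v (x i0) := lt_of_le_of_lt (coord_le_NN y i0) (by rwa [hi0] at h)
      simpa using v_add_eq' hna this
    rw [hi0, ← hcoord]
    exact coord_le_NN (x + y) i0

end PiNorm

end Stmt2Proof

open Polynomial Stmt2Proof in
/-- For a Drinfeld module of generic characteristic over `K` of
characteristic `p` and a nonarchimedean absolute value `v` on `K` at which every nonzero
element of `𝔽_p[t]` is a unit and the coefficients of `φ` are integral, the image in
`K_v^g` of a finitely generated `Φ(R)`-submodule `Γ ⊆ K^g` generated by `v`-integral points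
is a discrete closed subgroup; in particular its topological closure in `K_v^g` is itself. -/
theorem stmt2 {K : Type*} [Field K] (p : ℕ) [Fact p.Prime] [CharP K p]
    (t : K) (D : ℕ) (hD : 1 ≤ D) (c : ℕ → K) (hcD : c D ≠ 0)
    (v : AbsoluteValue K ℝ) (hna : IsNonarchimedean (v : K → ℝ))
    (hunit : ∀ P : Polynomial (ZMod p), P ≠ 0 →
      v (Polynomial.eval₂ (ZMod.castHom (dvd_refl p) K) t P) = 1)
    (hint : ∀ i, 1 ≤ i → i ≤ D → v (c i) ≤ 1)
    (g : ℕ) (hg : 1 ≤ g)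
    (r : ℕ) (xs : Fin r → (Fin g → K)) (hxs : ∀ j i, v (xs j i) ≤ 1)
    (Γ : AddSubgroup (Fin g → K))
    -- `Γ` is a `Φ(R)`-submodule (under the coordinatewise action):
    (hΓmod : ∀ y ∈ Γ, (fun i => genericTphi p D t c (y i)) ∈ Γ)
    -- `Γ` contains the generators:
    (hgen : ∀ j, xs j ∈ Γ)
    -- `Γ` is the smallest such submodule, i.e. it is generated by the points `xs j`:
    (hmin : ∀ Γ' : AddSubgroup (Fin g → K),
      (∀ y ∈ Γ', (fun i => genericTphi p D t c (y i)) ∈ Γ') → (∀ j, xs j ∈ Γ') → Γ ≤ Γ') :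
    letI S : Set (Fin g → v.Completion) :=
      {y | ∃ γ ∈ Γ, y = fun i => embCompletion v (γ i)}
    IsClosed S ∧ DiscreteTopology ↥S ∧ closure S = S := by
  classical
  haveI : Nonempty (Fin g) := ⟨⟨0, hg⟩⟩
  set S : Set (Fin g → v.Completion) := {y | ∃ γ ∈ Γ, y = fun i => embCompletion v (γ i)}
    with hSdef
  -- the coordinatewise T_φ as a ℤ-linear endomorphism of K^g
  let Tpi : (Fin g → K) →ₗ[ℤ] (Fin g → K) :=
    (AddMonoidHom.mk' (fun z => fun i => genericTphi p D t c (z i))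
      (fun z w => by funext i; exact Tk_add (z i) (w i))).toIntLinearMap
  have Tpi_iter : ∀ (j : ℕ) (z : Fin g → K) (i : Fin g),
      (Tpi^[j] z) i = (genericTphi p D t c)^[j] (z i) := by
    intro j
    induction j with
    | zero => intro z i; rfl
    | succ j ih =>
      intro z i
      rw [Function.iterate_succ_apply', Function.iterate_succ_apply']
      have h1 : (Tpi (Tpi^[j] z)) i = genericTphi p D t c ((Tpi^[j] z) i) := rfl
      rw [h1, ih]
  have BR : ∀ (b : Polynomial ℤ) (z : Fin g → K) (i : Fin g),
      (Polynomial.aeval Tpi b) z i = actK p D t c b (z i) := by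
    intro b z i
    have h1 : (Polynomial.aeval Tpi b) = ∑ j ∈ Finset.range (b.natDegree + 1),
        b.coeff j • Tpi ^ j := Polynomial.aeval_eq_sum_range Tpi
    rw [h1, LinearMap.coe_sum, Finset.sum_apply, Finset.sum_apply, actK]
    refine Finset.sum_congr rfl fun j _ => ?_
    rw [LinearMap.smul_apply, Pi.smul_apply, Module.End.pow_apply, Tpi_iter j z i,
      zsmul_eq_mul]
  let ofE := Module.AEval'.of Tpi
  let W : Submodule (Polynomial ℤ) (Module.AEval' Tpi) :=
    Submodule.span _ (Set.range fun j => ofE (xs j))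
  have hWle : ∀ w, w ∈ W → ∀ i, v ((ofE.symm w) i) ≤ 1 := by
    intro w hw
    refine Submodule.span_induction ?_ ?_ ?_ ?_ hw
    · rintro x ⟨j, rfl⟩ i
      simpa using hxs j i
    · intro i; simpa using zero_le_one
    · intro x y hx hy hx' hy' i
      have h1 : (ofE.symm (x + y)) i = (ofE.symm x) i + (ofE.symm y) i := by
        rw [map_add]; rfl
      rw [h1]
      exact le_trans (hna _ _) (max_le (hx' i) (hy' i))
    · intro a x hx hx' i
      have h1 : ofE.symm (a • x) = (Polynomial.aeval Tpi a) (ofE.symm x) := by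
        rw [Module.AEval.of_symm_smul, Module.End.smul_def]
      rw [h1, BR]
      exact le_trans (v_actK_le hna hunit hint a (hx' i)) (hx' i)
  have hgen' : ∀ j, ofE (xs j) ∈ W := fun j => Submodule.subset_span ⟨j, rfl⟩
  have hsub : ∀ y ∈ Γ, ofE y ∈ W := by
    have := hmin
      { carrier := {y | ofE y ∈ W}
        zero_mem' := by simpa using Submodule.zero_mem W
        add_mem' := fun {a b} ha hb => by
          show ofE (a + b) ∈ W; rw [map_add]; exact Submodule.add_mem W ha hb
        neg_mem' := fun {a} ha => by
          show ofE (-a) ∈ W; rw [map_neg]; exact Submodule.neg_mem W ha }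
      ?_ ?_
    · exact this
    · intro y hy
      have hy' : ofE y ∈ W := hy
      have h5 : (X : Polynomial ℤ) • ofE y ∈ W := Submodule.smul_mem W _ hy'
      rw [Module.AEval'.X_smul_of] at h5
      exact h5
    · intro j
      exact hgen' j
  have hfg : W.FG := Submodule.fg_span (Set.finite_range _)
  haveI hNoeth : IsNoetherian (Polynomial ℤ) ↥W := isNoetherian_of_fg_of_noetherian W hfg
  -- the uniform gap
  have GAP : ∃ ε : ℝ, 0 < ε ∧ ∀ z : Fin g → K, ofE z ∈ W → z ≠ 0 → ε ≤ NN v z := by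
    by_contra hcon
    push_neg at hcon
    have hcon' : ∀ ε : ℝ, 0 < ε → ∃ z : Fin g → K, (ofE z ∈ W ∧ z ≠ 0) ∧ NN v z < ε := by
      intro ε hε
      obtain ⟨z, h1, h2, h3⟩ := hcon ε hε
      exact ⟨z, ⟨h1, h2⟩, h3⟩
    obtain ⟨z0, hz0, hz03⟩ := hcon' 1 one_pos
    have step : ∀ a : {z : Fin g → K // ofE z ∈ W ∧ z ≠ 0},
        ∃ b2 : {z : Fin g → K // ofE z ∈ W ∧ z ≠ 0}, NN v b2.1 < NN v a.1 := by
      intro a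
      obtain ⟨z, h1, h3⟩ := hcon' (NN v a.1) (NN_pos a.2.2)
      exact ⟨⟨z, h1⟩, h3⟩
    choose f hf using step
    set Zs : ℕ → {z : Fin g → K // ofE z ∈ W ∧ z ≠ 0} := fun n => f^[n] ⟨z0, hz0⟩ with hZs
    have hsucc : ∀ n, Zs (n + 1) = f (Zs n) := fun n => Function.iterate_succ_apply' f n _
    have hdec : StrictAnti fun n => NN v (Zs n).1 :=
      strictAnti_nat_of_succ_lt fun n => by rw [hsucc n]; exact hf (Zs n)
    have hlt1 : ∀ n, NN v (Zs n).1 < 1 := by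
      intro n
      have h0 : NN v (Zs 0).1 < 1 := hz03
      exact lt_of_le_of_lt (hdec.antitone (Nat.zero_le n)) h0
    let ζ : ℕ → ↥W := fun n => ⟨ofE (Zs n).1, (Zs n).2.1⟩
    let Msub : ℕ →o Submodule (Polynomial ℤ) ↥W :=
      ⟨fun n => Submodule.span _ (ζ '' Set.Iic n),
        fun a b hab => Submodule.span_mono (Set.image_mono (Set.Iic_subset_Iic.mpr hab))⟩
    obtain ⟨n, hn⟩ := monotone_stabilizes_iff_noetherian.mpr hNoeth Msub
    have hζmem : ζ (n + 1) ∈ Msub n := by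
      have h1 : Msub n = Msub (n + 1) := hn (n + 1) (Nat.le_succ n)
      rw [h1]
      exact Submodule.subset_span ⟨n + 1, Set.mem_Iic.mpr le_rfl, rfl⟩
    have hmapped : ofE (Zs (n + 1)).1 ∈ Submodule.map W.subtype (Msub n) :=
      ⟨ζ (n + 1), hζmem, rfl⟩
    have hMn : Msub n = Submodule.span (Polynomial ℤ) (ζ '' Set.Iic n) := rfl
    rw [hMn, Submodule.map_span] at hmapped
    have hsets : W.subtype '' (ζ '' Set.Iic n)
        = Set.range fun k : Fin (n + 1) => ofE (Zs (k : ℕ)).1 := by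
      ext w
      constructor
      · rintro ⟨-, ⟨m, hm, rfl⟩, rfl⟩
        exact ⟨⟨m, Nat.lt_succ_of_le hm⟩, rfl⟩
      · rintro ⟨k, rfl⟩
        exact ⟨ζ (k : ℕ), ⟨(k : ℕ), Set.mem_Iic.mpr (Nat.lt_succ_iff.mp k.isLt), rfl⟩, rfl⟩
    rw [hsets, Submodule.mem_span_range_iff_exists_fun] at hmapped
    obtain ⟨b, hb⟩ := hmapped
    have hrep : (Zs (n + 1)).1
        = ∑ k : Fin (n + 1), (Polynomial.aeval Tpi (b k)) ((Zs (k : ℕ)).1) := by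
      have h2 := congrArg ofE.symm hb
      rw [map_sum] at h2
      simp only [Module.AEval.of_symm_smul, LinearEquiv.symm_apply_apply,
        Module.End.smul_def] at h2
      exact h2.symm
    set Vk : Fin (n + 1) → (Fin g → K) :=
      fun k => (Polynomial.aeval Tpi (b k)) ((Zs (k : ℕ)).1) with hVk
    set s : Finset (Fin (n + 1)) :=
      Finset.univ.filter (fun k => (b k).map (Int.castRingHom (ZMod p)) ≠ 0) with hs
    have hV0 : ∀ k, k ∉ s → Vk k = 0 := by
      intro k hk
      have hmap : (b k).map (Int.castRingHom (ZMod p)) = 0 := by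
        by_contra hne
        exact hk (Finset.mem_filter.mpr ⟨Finset.mem_univ _, hne⟩)
      funext i
      have h1 : Vk k i = actK p D t c (b k) ((Zs (k : ℕ)).1 i) := BR _ _ _
      rw [h1, actK_zero_of hmap]
      rfl
    have hsum_s : (Zs (n + 1)).1 = ∑ k ∈ s, Vk k := by
      rw [hrep]
      exact (Finset.sum_subset (Finset.filter_subset _ _) fun k _ hk => hV0 k hk).symm
    have hsne : s.Nonempty := by
      rw [Finset.nonempty_iff_ne_empty]
      intro hempty
      apply (Zs (n + 1)).2.2
      rw [hsum_s, hempty, Finset.sum_empty]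
    set k0 := s.min' hsne with hk0
    have hk0s : k0 ∈ s := s.min'_mem hsne
    have hVksN : ∀ k, k ∈ s → ∀ i, v (Vk k i) = v ((Zs (k : ℕ)).1 i) := by
      intro k hk i
      have hmapne := (Finset.mem_filter.mp hk).2
      have hco : v ((Zs (k : ℕ)).1 i) < 1 :=
        lt_of_le_of_lt (coord_le_NN _ i) (hlt1 (k : ℕ))
      have h1 : Vk k i = actK p D t c (b k) ((Zs (k : ℕ)).1 i) := BR _ _ _
      rw [h1]
      exact v_actK_eq hna hunit hint hmapne hco
    have hNNVk : ∀ k ∈ s, NN v (Vk k) = NN v ((Zs (k : ℕ)).1) :=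
      fun k hk => NN_congr (hVksN k hk)
    have hsplit : ∑ k ∈ s, Vk k = Vk k0 + ∑ k ∈ s.erase k0, Vk k :=
      (Finset.add_sum_erase s Vk hk0s).symm
    have hrest : NN v (∑ k ∈ s.erase k0, Vk k) ≤ NN v (Zs ((k0 : ℕ) + 1)).1 := by
      refine NN_sum_le hna _ _ (NN_nonneg _) ?_
      intro k hk
      have hks : k ∈ s := Finset.mem_of_mem_erase hk
      rw [hNNVk k hks]
      have hkge : (k0 : ℕ) + 1 ≤ (k : ℕ) := by
        have h1 : k0 ≤ k := s.min'_le k hks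
        have h2 : k0 ≠ k := (Finset.ne_of_mem_erase hk).symm
        have h3 : k0 < k := lt_of_le_of_ne h1 h2
        exact Nat.succ_le_of_lt (Fin.lt_def.mp h3)
      exact hdec.antitone hkge
    have hVk0NN : NN v (Vk k0) = NN v (Zs (k0 : ℕ)).1 := hNNVk k0 hk0s
    have hfin : NN v (Zs (n + 1)).1 = NN v (Zs (k0 : ℕ)).1 := by
      have hlt : NN v (∑ k ∈ s.erase k0, Vk k) < NN v (Vk k0) := by
        rw [hVk0NN]
        exact lt_of_le_of_lt hrest (hdec (Nat.lt_succ_self _))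
      rw [hsum_s, hsplit, NN_add_eq hna hlt, hVk0NN]
    have hcontr : NN v (Zs (n + 1)).1 < NN v (Zs (k0 : ℕ)).1 :=
      hdec (Nat.lt_succ_of_le (Nat.lt_succ_iff.mp k0.isLt))
    rw [hfin] at hcontr
    exact lt_irrefl _ hcontr
  obtain ⟨ε, hε, hgap⟩ := GAP
  -- separation of Γ in K^g
  have hsep : ∀ y z : Fin g → K, y ∈ Γ → z ∈ Γ → y ≠ z → ∃ i, ε ≤ v (y i - z i) := by
    intro y z hy hz hne
    have hdiff : ofE (y - z) ∈ W := hsub _ (Γ.sub_mem hy hz)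
    have hne0 : y - z ≠ 0 := sub_ne_zero.mpr hne
    obtain ⟨i, hi⟩ := exists_NN_eq (v := v) (y - z)
    refine ⟨i, ?_⟩
    have h1 := hgap _ hdiff hne0
    rw [hi] at h1
    simpa using h1
  have hdist : ∀ a b : K, dist (embCompletion v a) (embCompletion v b) = v (a - b) := by
    intro a b
    have h1 : dist (embCompletion v a) (embCompletion v b)
        = dist ((WithAbs.equiv v).symm a) ((WithAbs.equiv v).symm b) :=
      UniformSpace.Completion.dist_eq _ _
    rw [h1, dist_eq_norm]
    rfl
  have hSsep : ∀ y1, y1 ∈ S → ∀ y2, y2 ∈ S → y1 ≠ y2 → ε ≤ dist y1 y2 := by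
    rintro _ ⟨γ1, hγ1, rfl⟩ _ ⟨γ2, hγ2, rfl⟩ hne
    have hγne : γ1 ≠ γ2 := by rintro rfl; exact hne rfl
    obtain ⟨i, hi⟩ := hsep γ1 γ2 hγ1 hγ2 hγne
    calc ε ≤ v (γ1 i - γ2 i) := hi
      _ = dist (embCompletion v (γ1 i)) (embCompletion v (γ2 i)) := (hdist _ _).symm
      _ ≤ dist (fun i => embCompletion v (γ1 i)) (fun i => embCompletion v (γ2 i)) :=
          dist_le_pi_dist (fun i => embCompletion v (γ1 i)) (fun i => embCompletion v (γ2 i)) i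
  have hclosed : IsClosed S := by
    refine isClosed_of_closure_subset ?_
    intro z hz
    rw [Metric.mem_closure_iff] at hz
    obtain ⟨s1, hs1, hd1⟩ := hz (ε / 2) (by positivity)
    have hz_eq : z = s1 := by
      by_contra hne
      have hpos : 0 < dist z s1 := dist_pos.mpr hne
      obtain ⟨s2, hs2, hd2⟩ := hz (min (ε / 2) (dist z s1)) (lt_min (by positivity) hpos)
      have hs12 : s2 = s1 := by
        by_contra hne2
        have h := hSsep s2 hs2 s1 hs1 hne2
        have hlt : dist s2 s1 < ε := by
          calc dist s2 s1 ≤ dist s2 z + dist z s1 := dist_triangle _ _ _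
            _ < ε / 2 + ε / 2 := by
                refine add_lt_add ?_ hd1
                rw [dist_comm]
                exact lt_of_lt_of_le hd2 (min_le_left _ _)
            _ = ε := add_halves ε
        exact absurd h (not_le.mpr hlt)
      rw [hs12] at hd2
      exact absurd hd2 (not_lt.mpr (min_le_right _ _))
    rw [hz_eq]
    exact hs1
  refine ⟨hclosed, ?_, hclosed.closure_eq⟩
  rw [discreteTopology_iff_isOpen_singleton]
  rintro ⟨y, hy⟩
  have hset : {(⟨y, hy⟩ : ↥S)} = (Subtype.val : ↥S → (Fin g → v.Completion)) ⁻¹' (Metric.ball y ε) := by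
    ext ⟨y', hy'⟩
    simp only [Set.mem_singleton_iff, Set.mem_preimage, Metric.mem_ball, Subtype.mk.injEq]
    constructor
    · rintro rfl
      simpa using hε
    · intro hlt
      by_contra hne
      exact absurd (hSsep y' hy' y hy hne) (not_le.mpr hlt)
  rw [hset]
  exact Metric.isOpen_ball.preimage continuous_subtype_val
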